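/- Let k ≥ 3 be an integer, let v_1 ≥ v_2 ≥ … ≥ v_n > 0, and let B be an integer with 0 ≤ B ≤ n. Suppose π ∈ [0,1]^n satisfies Σ_{j=1}^n π_j ≤ B and is a symmetric equilibrium, i.e., for every q ∈ [0,1]^n with Σ_{j=1}^n q_j ≤ B, Σ_{j=1}^n [q_j·u_1(π_j, v_j) + (1−q_j)·u_0(π_j, v_j)] ≤ Σ_{j=1}^n [π_j·u_1(π_j, v_j) + (1−π_j)·u_0(π_j, v_j)]. Then π_j = m_{v_j}^{-1}(x*) for every j ∈ [n]. That is, the symmetric Nash equilibrium of the Boolean-valued General Lotto game is unique. -/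

import Mathlib

/-- Marginal utility `m_v(p)` of competing in a battlefield of value `v` in the
`k`-player Boolean General Lotto game, when each of the other `k−1` players
independently competes with probability `p`. -/
noncomputable def mMarg (k : ℕ) (v p : ℝ) : ℝ :=
  if p = 0 then ((k : ℝ) - 1) * v / k else (v / k) * ((1 - (1 - p) ^ (k - 1)) / p)

/-- Expected share of a value-`v` battlefield from *not* competing. -/
noncomputable def u0 (k : ℕ) (p v : ℝ) : ℝ := (v / k) * (1 - p) ^ (k - 1)

/-- Expected share of a value-`v` battlefield from competing. -/
noncomputable def u1 (k : ℕ) (p v : ℝ) : ℝ :=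
  v * ∑ t ∈ Finset.range k,
    ((k - 1).choose t : ℝ) * p ^ t * (1 - p) ^ (k - 1 - t) / ((t : ℝ) + 1)

noncomputable def Mpoly (k : ℕ) (v p : ℝ) : ℝ :=
  (v / k) * ∑ i ∈ Finset.range (k - 1), (1 - p) ^ i

lemma geom_aux (K : ℕ) (p : ℝ) :
    p * ∑ i ∈ Finset.range K, (1 - p) ^ i = 1 - (1 - p) ^ K := by
  have h := geom_sum_mul (1 - p) K
  nlinarith [h]

lemma mMarg_eq (k : ℕ) (hk : 1 ≤ k) (v p : ℝ) : mMarg k v p = Mpoly k v p := by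
  unfold mMarg Mpoly
  by_cases hp : p = 0
  · simp [hp]
    have : ((k - 1 : ℕ) : ℝ) = (k : ℝ) - 1 := by
      push_cast [Nat.cast_sub hk]; ring
    rw [this]; ring
  · simp only [hp, if_false]
    have h := geom_aux (k - 1) p
    field_simp
    linear_combination (-v) * h

lemma key_sum (k : ℕ) (hk : 1 ≤ k) (p : ℝ) :
    (k : ℝ) * ∑ t ∈ Finset.range k,
        ((k - 1).choose t : ℝ) * p ^ t * (1 - p) ^ (k - 1 - t) / ((t : ℝ) + 1)
      = ∑ i ∈ Finset.range k, (1 - p) ^ i := by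
  by_cases hp : p = 0
  · subst hp
    have h1 : ∑ t ∈ Finset.range k,
        ((k - 1).choose t : ℝ) * (0:ℝ) ^ t * (1 - 0) ^ (k - 1 - t) / ((t : ℝ) + 1) = 1 := by
      rw [Finset.sum_eq_single 0]
      · simp
      · intro t _ htne; simp [zero_pow htne]
      · intro h; simp at h; omega
    rw [h1]
    simp
  · -- multiply by p
    have hcoef : ∀ t : ℕ, (k : ℝ) * ((k - 1).choose t : ℝ)
        = ((k.choose (t + 1)) : ℝ) * ((t : ℝ) + 1) := by
      intro t
      have h := Nat.add_one_mul_choose_eq (k - 1) t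
      have hks : (k - 1) + 1 = k := by omega
      rw [hks] at h
      exact_mod_cast h
    apply mul_left_cancel₀ hp
    have hL : p * ((k : ℝ) * ∑ t ∈ Finset.range k,
        ((k - 1).choose t : ℝ) * p ^ t * (1 - p) ^ (k - 1 - t) / ((t : ℝ) + 1))
        = ∑ t ∈ Finset.range k, p ^ (t + 1) * (1 - p) ^ (k - (t + 1)) * ((k.choose (t + 1)) : ℝ) := by
      rw [Finset.mul_sum, Finset.mul_sum]
      refine Finset.sum_congr rfl (fun t _ => ?_)
      have he : k - 1 - t = k - (t + 1) := by omega
      rw [he]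
      have ht1 : ((t : ℝ) + 1) ≠ 0 := by positivity
      field_simp
      linear_combination (p ^ (t + 1) * (1 - p) ^ (k - (t + 1))) * hcoef t
    rw [hL]
    have hb := add_pow p (1 - p) k
    rw [show p + (1 - p) = 1 by ring, one_pow, Finset.sum_range_succ'] at hb
    simp only [pow_zero, Nat.sub_zero, Nat.choose_zero_right, Nat.cast_one, one_mul, mul_one] at hb
    rw [geom_aux]
    linarith

lemma u1_eq (k : ℕ) (hk : 1 ≤ k) (v p : ℝ) :
    u1 k p v = (v / k) * ∑ i ∈ Finset.range k, (1 - p) ^ i := by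
  have hk0 : (k : ℝ) ≠ 0 := by positivity
  have h := key_sum k hk p
  unfold u1
  rw [← h]
  field_simp

lemma u1_sub_u0 (k : ℕ) (hk : 1 ≤ k) (v p : ℝ) :
    u1 k p v - u0 k p v = Mpoly k v p := by
  rw [u1_eq k hk v p]
  unfold u0 Mpoly
  have : k = (k - 1) + 1 := by omega
  rw [this, Finset.sum_range_succ]
  have h2 : (k - 1) + 1 = k := by omega
  rw [h2]
  ring

lemma Mpoly_anti (k : ℕ) (hk : 3 ≤ k) (v : ℝ) (hv : 0 < v) {a b : ℝ}
    (ha : 0 ≤ a) (hb : b ≤ 1) (hab : a < b) : Mpoly k v b < Mpoly k v a := by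
  unfold Mpoly
  have hvk : 0 < v / k := by positivity
  apply mul_lt_mul_of_pos_left _ hvk
  apply Finset.sum_lt_sum
  · intro i _
    exact pow_le_pow_left₀ (by linarith) (by linarith) i
  · refine ⟨1, Finset.mem_range.mpr (by omega), ?_⟩
    simpa using (by linarith : 1 - b < 1 - a)

lemma Mpoly_lb (k : ℕ) (hk : 2 ≤ k) (v : ℝ) (hv : 0 < v) {p : ℝ}
    (hp0 : 0 ≤ p) (hp1 : p ≤ 1) : v / k ≤ Mpoly k v p := by
  unfold Mpoly
  have hvk : 0 < v / k := by positivity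
  have h1 : (1 : ℝ) ≤ ∑ i ∈ Finset.range (k - 1), (1 - p) ^ i := by
    calc (1:ℝ) = (1 - p) ^ 0 := by simp
      _ ≤ ∑ i ∈ Finset.range (k - 1), (1 - p) ^ i :=
        Finset.single_le_sum (fun i _ => pow_nonneg (by linarith) i) (Finset.mem_range.mpr (by omega))
  nlinarith

lemma Mpoly_ub (k : ℕ) (hk : 1 ≤ k) (v : ℝ) (hv : 0 < v) {p : ℝ}
    (hp0 : 0 ≤ p) (hp1 : p ≤ 1) : Mpoly k v p ≤ ((k : ℝ) - 1) * v / k := by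
  unfold Mpoly
  have hvk : 0 < v / k := by positivity
  have h1 : ∑ i ∈ Finset.range (k - 1), (1 - p) ^ i ≤ ((k : ℝ) - 1) := by
    have : ∑ i ∈ Finset.range (k - 1), (1 - p) ^ i ≤ ∑ i ∈ Finset.range (k - 1), (1 : ℝ) :=
      Finset.sum_le_sum (fun i _ => pow_le_one₀ (by linarith) (by linarith))
    simp only [Finset.sum_const, Finset.card_range, nsmul_eq_mul, mul_one] at this
    have hc : ((k - 1 : ℕ) : ℝ) = (k : ℝ) - 1 := by push_cast [Nat.cast_sub hk]; ring
    linarith [hc ▸ this]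
  calc (v / k) * ∑ i ∈ Finset.range (k - 1), (1 - p) ^ i ≤ (v / k) * ((k : ℝ) - 1) :=
        mul_le_mul_of_nonneg_left h1 (le_of_lt hvk)
    _ = ((k : ℝ) - 1) * v / k := by ring

lemma Mpoly_cont (k : ℕ) (v : ℝ) : Continuous (Mpoly k v) := by
  unfold Mpoly
  exact continuous_const.mul (continuous_finset_sum _ (fun i _ => by fun_prop))

lemma Mpoly_one (k : ℕ) (hk : 2 ≤ k) (v : ℝ) : Mpoly k v 1 = v / k := by
  unfold Mpoly
  have h : ∑ i ∈ Finset.range (k - 1), ((1:ℝ) - 1) ^ i = 1 := by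
    rw [Finset.sum_eq_single 0]
    · simp
    · intro t _ htne; simp [zero_pow htne]
    · intro h; simp at h; omega
  rw [h]; ring

lemma Mpoly_zero (k : ℕ) (hk : 1 ≤ k) (v : ℝ) : Mpoly k v 0 = ((k : ℝ) - 1) * v / k := by
  unfold Mpoly
  simp only [sub_zero, one_pow, Finset.sum_const, Finset.card_range, nsmul_eq_mul, mul_one]
  have hc : ((k - 1 : ℕ) : ℝ) = (k : ℝ) - 1 := by push_cast [Nat.cast_sub hk]; ring
  rw [hc]; ring

lemma Mpoly_surj (k : ℕ) (hk : 3 ≤ k) (v : ℝ) (hv : 0 < v) {x : ℝ}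
    (hx1 : v / k ≤ x) (hx2 : x ≤ ((k : ℝ) - 1) * v / k) :
    ∃ p ∈ Set.Icc (0:ℝ) 1, Mpoly k v p = x := by
  have h01 : (0:ℝ) ≤ 1 := by norm_num
  have hc : ContinuousOn (Mpoly k v) (Set.Icc 0 1) := (Mpoly_cont k v).continuousOn
  have himg := intermediate_value_Icc' h01 hc
  rw [Mpoly_one k (by omega) v, Mpoly_zero k (by omega) v] at himg
  obtain ⟨p, hp, hpx⟩ := himg ⟨hx1, hx2⟩
  exact ⟨p, hp, hpx⟩

theorem stmt14 (k n : ℕ) (hk : 3 ≤ k) (B : ℕ) (hB : B ≤ n)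
    (v : Fin n → ℝ) (hv : ∀ j, 0 < v j)
    (hsorted : ∀ i j : Fin n, i ≤ j → v j ≤ v i)
    -- `minv j` is the extended inverse `m_{v_j}^{-1} : ℝ → [0,1]`:
    (minv : Fin n → ℝ → ℝ)
    (hminv_inv : ∀ j, ∀ p ∈ Set.Icc (0 : ℝ) 1, minv j (mMarg k (v j) p) = p)
    (hminv_lo : ∀ j, ∀ x : ℝ, x < v j / k → minv j x = 1)
    (hminv_hi : ∀ j, ∀ x : ℝ, ((k : ℝ) - 1) * v j / k < x → minv j x = 0)
    -- `x* = inf {x : Σ_j m_{v_j}^{-1}(x) ≤ B}`: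
    (xstar : ℝ) (hxstar : xstar = sInf {x : ℝ | ∑ j, minv j x ≤ (B : ℝ)})
    -- `π` is a symmetric equilibrium:
    (π : Fin n → ℝ) (hπ01 : ∀ j, π j ∈ Set.Icc (0 : ℝ) 1) (hπB : ∑ j, π j ≤ (B : ℝ))
    (hπeq : ∀ q : Fin n → ℝ, (∀ j, q j ∈ Set.Icc (0 : ℝ) 1) → ∑ j, q j ≤ (B : ℝ) →
      ∑ j, (q j * u1 k (π j) (v j) + (1 - q j) * u0 k (π j) (v j)) ≤
        ∑ j, (π j * u1 k (π j) (v j) + (1 - π j) * u0 k (π j) (v j))) :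
    ∀ j, π j = minv j xstar := by
  have hk1 : 1 ≤ k := by omega
  have hk2 : 2 ≤ k := by omega
  have hkR : (0:ℝ) < k := by exact_mod_cast (by omega : 0 < k)
  -- basic minv facts
  have hmM : ∀ j, ∀ p ∈ Set.Icc (0:ℝ) 1, minv j (Mpoly k (v j) p) = p := by
    intro j p hp; rw [← mMarg_eq k hk1]; exact hminv_inv j p hp
  have F1 : ∀ j, ∀ x : ℝ, x ≤ v j / k → minv j x = 1 := by
    intro j x hx
    rcases lt_or_eq_of_le hx with h | h
    · exact hminv_lo j x h
    · rw [h, ← Mpoly_one k hk2 (v j)]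
      exact hmM j 1 ⟨zero_le_one, le_refl 1⟩
  have F2 : ∀ j, ∀ x : ℝ, ((k:ℝ) - 1) * v j / k ≤ x → minv j x = 0 := by
    intro j x hx
    rcases lt_or_eq_of_le hx with h | h
    · exact hminv_hi j x h
    · rw [← h, ← Mpoly_zero k hk1 (v j)]
      exact hmM j 0 ⟨le_refl 0, zero_le_one⟩
  have F4 : ∀ j, ∀ x : ℝ, 0 ≤ minv j x ∧ minv j x ≤ 1 := by
    intro j x
    rcases lt_or_ge x (v j / k) with h1 | h1
    · rw [hminv_lo j x h1]; norm_num
    rcases lt_or_ge (((k:ℝ) - 1) * v j / k) x with h2 | h2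
    · rw [hminv_hi j x h2]; norm_num
    obtain ⟨p, hp, hMp⟩ := Mpoly_surj k hk (v j) (hv j) h1 h2
    rw [← hMp, hmM j p hp]
    exact ⟨hp.1, hp.2⟩
  have F5 : ∀ j, ∀ x y : ℝ, x ≤ y → minv j y ≤ minv j x := by
    intro j x y hxy
    rcases le_or_gt x (v j / k) with h | h
    · rw [F1 j x h]; exact (F4 j y).2
    rcases le_or_gt (((k:ℝ) - 1) * v j / k) y with h' | h'
    · rw [F2 j y h']; exact (F4 j x).1
    have hxub : x ≤ ((k:ℝ) - 1) * v j / k := le_of_lt (lt_of_le_of_lt hxy h')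
    obtain ⟨p, hp, hMp⟩ := Mpoly_surj k hk (v j) (hv j) (le_of_lt h) hxub
    obtain ⟨q, hq, hMq⟩ := Mpoly_surj k hk (v j) (hv j) (le_trans (le_of_lt h) hxy) (le_of_lt h')
    rw [← hMp, ← hMq, hmM j p hp, hmM j q hq]
    by_contra hc
    push_neg at hc
    have := Mpoly_anti k hk (v j) (hv j) hp.1 hq.2 hc
    rw [hMp, hMq] at this
    linarith
  -- the linear objective
  set C : Fin n → ℝ := fun j => Mpoly k (v j) (π j) with hCdef
  have hCpos : ∀ j, 0 < C j := fun j =>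
    lt_of_lt_of_le (div_pos (hv j) hkR) (Mpoly_lb k hk2 (v j) (hv j) (hπ01 j).1 (hπ01 j).2)
  have key : ∀ q : Fin n → ℝ, (∀ j, q j ∈ Set.Icc (0:ℝ) 1) → ∑ j, q j ≤ (B:ℝ) →
      ∑ j, q j * C j ≤ ∑ j, π j * C j := by
    intro q hq hqB
    have h := hπeq q hq hqB
    have e : ∀ (r : Fin n → ℝ),
        ∑ j, (r j * u1 k (π j) (v j) + (1 - r j) * u0 k (π j) (v j))
          = ∑ j, u0 k (π j) (v j) + ∑ j, r j * C j := by
      intro r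
      rw [← Finset.sum_add_distrib]
      refine Finset.sum_congr rfl fun j _ => ?_
      have hC := u1_sub_u0 k hk1 (v j) (π j)
      simp only [hCdef]
      rw [← hC]; ring
    rw [e q, e π] at h
    linarith
  -- trivial case n = 0
  rcases Nat.eq_zero_or_pos n with hn0 | hn0
  · subst hn0; intro j; exact j.elim0
  have hne : (Finset.univ : Finset (Fin n)).Nonempty := ⟨⟨0, hn0⟩, Finset.mem_univ _⟩
  have hnR : (0:ℝ) < n := by exact_mod_cast hn0
  rcases eq_or_lt_of_le hB with hBn | hBn
  · -- case B = n : everyone plays 1, xstar = 0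
    have hq1 := key (fun _ => 1) (fun j => ⟨zero_le_one, le_refl 1⟩)
      (by simp [hBn])
    have hnn : ∀ j ∈ Finset.univ, (0:ℝ) ≤ (1 - π j) * C j := fun j _ =>
      mul_nonneg (by linarith [(hπ01 j).2]) (hCpos j).le
    have hsum0 : ∑ j, (1 - π j) * C j = 0 := by
      apply le_antisymm
      · have : ∑ j, (1 - π j) * C j = ∑ j, 1 * C j - ∑ j, π j * C j := by
          rw [← Finset.sum_sub_distrib]
          exact Finset.sum_congr rfl fun j _ => by ring
        rw [this]; linarith
      · exact Finset.sum_nonneg hnn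
    have hall1 : ∀ j, π j = 1 := by
      intro j
      have := (Finset.sum_eq_zero_iff_of_nonneg hnn).mp hsum0 j (Finset.mem_univ j)
      rcases mul_eq_zero.mp this with h | h
      · linarith
      · exact absurd h (ne_of_gt (hCpos j))
    have hset : {x : ℝ | ∑ j, minv j x ≤ (B:ℝ)} = Set.univ := by
      ext x
      simp only [Set.mem_setOf_eq, Set.mem_univ, iff_true]
      calc ∑ j, minv j x ≤ ∑ _j : Fin n, (1:ℝ) :=
            Finset.sum_le_sum fun j _ => (F4 j x).2
        _ = (n : ℝ) := by simp
        _ = (B : ℝ) := by rw [hBn]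
    have hx0 : xstar = 0 := by
      rw [hxstar, hset]
      exact Real.sInf_of_not_bddBelow (by simpa using not_bddBelow_univ)
    intro j
    rw [hall1 j, hx0, hminv_lo j 0 (div_pos (hv j) hkR)]
  · -- case B < n
    have hBnR : (B:ℝ) < n := by exact_mod_cast hBn
    have hexlt1 : ∃ i, π i < 1 := by
      by_contra hc
      push_neg at hc
      have : (n:ℝ) ≤ ∑ j, π j := by
        calc (n:ℝ) = ∑ _j : Fin n, (1:ℝ) := by simp
          _ ≤ ∑ j, π j := Finset.sum_le_sum fun j _ => hc j
      linarith
    -- Step 1 : the budget is saturated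
    have hsum : ∑ j, π j = (B:ℝ) := by
      by_contra hneq
      have hlt : ∑ j, π j < (B:ℝ) := lt_of_le_of_ne hπB hneq
      obtain ⟨j0, hj0⟩ := hexlt1
      set ε := min (1 - π j0) ((B:ℝ) - ∑ j, π j) with hεdef
      have hε0 : 0 < ε := lt_min (by linarith) (by linarith)
      set q : Fin n → ℝ := fun l => π l + (if l = j0 then ε else 0) with hqdef
      have hq01 : ∀ l, q l ∈ Set.Icc (0:ℝ) 1 := by
        intro l
        by_cases hl : l = j0
        · subst hl
          simp only [hqdef, if_true, eq_self_iff_true]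
          constructor
          · linarith [(hπ01 l).1]
          · linarith [min_le_left (1 - π l) ((B:ℝ) - ∑ j, π j)]
        · simp only [hqdef, if_neg hl, add_zero]
          exact hπ01 l
      have hqsum : ∑ l, q l = ∑ l, π l + ε := by
        simp only [hqdef]
        rw [Finset.sum_add_distrib, Finset.sum_ite_eq' Finset.univ j0 (fun _ => ε),
          if_pos (Finset.mem_univ j0)]
      have hk2' := key q hq01 (by
        rw [hqsum]
        linarith [min_le_right (1 - π j0) ((B:ℝ) - ∑ j, π j)])
      have hqC : ∑ l, q l * C l = ∑ l, π l * C l + ε * C j0 := by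
        simp only [hqdef]
        have : ∀ l, (π l + (if l = j0 then ε else 0)) * C l
            = π l * C l + (if l = j0 then ε * C l else 0) := by
          intro l; by_cases hl : l = j0 <;> simp [hl] <;> ring
        rw [Finset.sum_congr rfl fun l _ => this l, Finset.sum_add_distrib,
          Finset.sum_ite_eq' Finset.univ j0 (fun l => ε * C l), if_pos (Finset.mem_univ j0)]
      rw [hqC] at hk2'
      nlinarith [hCpos j0]
    -- Step 2 : exchange inequality
    have hex : ∀ i j : Fin n, π i < 1 → 0 < π j → C i ≤ C j := by
      intro i j hi hj
      by_cases hij : i = j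
      · subst hij; exact le_refl _
      set ε := min (1 - π i) (π j) with hεdef
      have hε0 : 0 < ε := lt_min (by linarith) hj
      set q : Fin n → ℝ := fun l =>
        π l + ((if l = i then ε else 0) + (if l = j then -ε else 0)) with hqdef
      have hq01 : ∀ l, q l ∈ Set.Icc (0:ℝ) 1 := by
        intro l
        by_cases hl : l = i
        · subst hl
          simp only [hqdef, if_true, eq_self_iff_true, if_neg hij]
          constructor
          · linarith [(hπ01 l).1]
          · have := min_le_left (1 - π l) (π j); linarith
        by_cases hl' : l = j
        · subst hl'
          simp only [hqdef, if_true, eq_self_iff_true, if_neg hl]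
          constructor
          · have := min_le_right (1 - π i) (π l); linarith
          · linarith [(hπ01 l).2]
        · simp only [hqdef, if_neg hl, if_neg hl', add_zero, zero_add]
          exact hπ01 l
      have hqsum : ∑ l, q l = ∑ l, π l := by
        simp only [hqdef]
        rw [Finset.sum_add_distrib, Finset.sum_add_distrib,
          Finset.sum_ite_eq' Finset.univ i (fun _ => ε),
          Finset.sum_ite_eq' Finset.univ j (fun _ => -ε),
          if_pos (Finset.mem_univ i), if_pos (Finset.mem_univ j)]
        ring
      have hk2' := key q hq01 (by rw [hqsum]; exact hπB)
      have hqC : ∑ l, q l * C l = ∑ l, π l * C l + (ε * C i - ε * C j) := by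
        simp only [hqdef]
        have : ∀ l, (π l + ((if l = i then ε else 0) + (if l = j then -ε else 0))) * C l
            = π l * C l + ((if l = i then ε * C l else 0) + (if l = j then -(ε * C l) else 0)) := by
          intro l
          by_cases hl : l = i
          · subst hl; simp [if_neg hij]; ring
          by_cases hl' : l = j
          · subst hl'; simp [if_neg hl]; ring
          · simp [hl, hl']
        rw [Finset.sum_congr rfl fun l _ => this l, Finset.sum_add_distrib,
          Finset.sum_add_distrib,
          Finset.sum_ite_eq' Finset.univ i (fun l => ε * C l),
          Finset.sum_ite_eq' Finset.univ j (fun l => -(ε * C l)),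
          if_pos (Finset.mem_univ i), if_pos (Finset.mem_univ j)]
        ring
      rw [hqC] at hk2'
      nlinarith
    -- Step 3 : the threshold lam
    set T : Finset (Fin n) := Finset.univ.filter (fun i => π i < 1) with hTdef
    have hTne : T.Nonempty := by
      obtain ⟨i, hi⟩ := hexlt1
      exact ⟨i, by simp [hTdef, hi]⟩
    set lam := T.sup' hTne C with hlamdef
    have hlam_ub : ∀ i ∈ T, C i ≤ lam := fun i hi => Finset.le_sup' C hi
    obtain ⟨i₀, hi₀T, hi₀eq⟩ := Finset.exists_mem_eq_sup' hTne C
    rw [← hlamdef] at hi₀eq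
    have hi₀lt : π i₀ < 1 := (Finset.mem_filter.mp hi₀T).2
    -- Step 4 : π j = minv j lam
    have hπlam : ∀ j, π j = minv j lam := by
      intro j
      rcases lt_or_ge (π j) 1 with hj1 | hj1
      · have hjT : j ∈ T := by simp [hTdef, hj1]
        have hCle : C j ≤ lam := hlam_ub j hjT
        rcases lt_or_eq_of_le (hπ01 j).1 with hj0 | hj0
        · have hge : lam ≤ C j := by
            rw [hi₀eq]; exact hex i₀ j hi₀lt hj0
          have hCj : C j = lam := le_antisymm hCle hge
          rw [← hCj]
          exact (hmM j (π j) (hπ01 j)).symm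
        · have hCj : C j = ((k:ℝ) - 1) * v j / k := by
            simp only [hCdef, ← hj0, Mpoly_zero k hk1]
          rw [← hj0]
          exact (F2 j lam (by rw [← hCj]; exact hCle)).symm
      · have hj1' : π j = 1 := le_antisymm (hπ01 j).2 hj1
        have h1 : lam ≤ C j := by
          rw [hi₀eq]; exact hex i₀ j hi₀lt (by rw [hj1']; norm_num)
        have hCj : C j = v j / k := by
          simp only [hCdef, hj1', Mpoly_one k hk2]
        rw [hj1']
        exact (F1 j lam (by rw [← hCj]; exact h1)).symm
    -- Step 5 : lam is in the feasible set
    set S := {x : ℝ | ∑ j, minv j x ≤ (B:ℝ)} with hSdef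
    have hlamS : lam ∈ S := by
      simp only [hSdef, Set.mem_setOf_eq]
      have heq : ∑ j, minv j lam = (B:ℝ) := by
        calc ∑ j, minv j lam = ∑ j, π j :=
              Finset.sum_congr rfl fun j _ => (hπlam j).symm
          _ = (B:ℝ) := hsum
      exact le_of_eq heq
    -- Step 6 : S is bounded below, xstar ≤ lam
    set L := Finset.univ.inf' hne (fun j => v j / k) with hLdef
    have hbdd : BddBelow S := by
      refine ⟨L, fun x hx => ?_⟩
      by_contra hc
      push_neg at hc
      have hall : ∀ j, minv j x = 1 := by
        intro j
        apply hminv_lo j x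
        calc x < L := hc
          _ ≤ v j / k := Finset.inf'_le _ (Finset.mem_univ j)
      have : ∑ j, minv j x = (n:ℝ) := by
        rw [Finset.sum_congr rfl fun j _ => hall j]; simp
      have hxS : ∑ j, minv j x ≤ (B:ℝ) := hx
      rw [this] at hxS
      linarith
    have hxlam : xstar ≤ lam := by
      rw [hxstar]; exact csInf_le hbdd hlamS
    -- Step 7 : ∑ minv j xstar ≤ B
    have hfx : ∑ j, minv j xstar ≤ (B:ℝ) := by
      apply le_of_forall_pos_le_add
      intro ε hε
      set ε' := ε / n with hε'def
      have hε'0 : 0 < ε' := by positivity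
      have hRC : ∀ j, ∃ δ > 0, ∀ x : ℝ, xstar ≤ x → x < xstar + δ →
          minv j xstar - ε' ≤ minv j x := by
        intro j
        by_cases hpe : minv j xstar ≤ ε'
        · exact ⟨1, one_pos, fun x _ _ => by linarith [(F4 j x).1]⟩
        push_neg at hpe
        rcases lt_or_ge xstar (v j / k) with hlo | hlo
        · refine ⟨v j / k - xstar, by linarith, fun x hx1 hx2 => ?_⟩
          rw [hminv_lo j x (by linarith)]
          linarith [(F4 j xstar).2]
        · have hhi : xstar ≤ ((k:ℝ) - 1) * v j / k := by
            by_contra hc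
            push_neg at hc
            rw [hminv_hi j xstar hc] at hpe
            linarith
          obtain ⟨p0, hp0, hMp0⟩ := Mpoly_surj k hk (v j) (hv j) hlo hhi
          have hpp0 : minv j xstar = p0 := by rw [← hMp0, hmM j p0 hp0]
          have hp10 : 0 ≤ minv j xstar - ε' := by linarith
          have hp1lt : minv j xstar - ε' < p0 := by rw [← hpp0]; linarith
          have hMlt : Mpoly k (v j) p0 < Mpoly k (v j) (minv j xstar - ε') :=
            Mpoly_anti k hk (v j) (hv j) hp10 (by rw [← hpp0]; exact (F4 j xstar).2) hp1lt
          rw [hMp0] at hMlt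
          refine ⟨Mpoly k (v j) (minv j xstar - ε') - xstar, by linarith, fun x hx1 hx2 => ?_⟩
          have hxle : x ≤ Mpoly k (v j) (minv j xstar - ε') := by linarith
          have h := F5 j x (Mpoly k (v j) (minv j xstar - ε')) hxle
          rw [hmM j (minv j xstar - ε')
            ⟨hp10, by linarith [(F4 j xstar).2, hε'0]⟩] at h
          exact h
      choose δ hδpos hδ using hRC
      set δ0 := Finset.univ.inf' hne δ with hδ0def
      have hδ0pos : 0 < δ0 := by
        rw [hδ0def, Finset.lt_inf'_iff]
        exact fun i _ => hδpos i
      have hexx : ∃ x ∈ S, x < xstar + δ0 := by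
        by_contra hc
        push_neg at hc
        have : xstar + δ0 ≤ sInf S := le_csInf ⟨lam, hlamS⟩ hc
        rw [← hxstar] at this
        linarith
      obtain ⟨x, hxS, hxlt⟩ := hexx
      have hxge : xstar ≤ x := by rw [hxstar]; exact csInf_le hbdd hxS
      have hxS' : ∑ j, minv j x ≤ (B:ℝ) := hxS
      calc ∑ j, minv j xstar ≤ ∑ j, (minv j x + ε') := by
            apply Finset.sum_le_sum
            intro j _
            have hlt : x < xstar + δ j :=
              lt_of_lt_of_le hxlt (by
                have := Finset.inf'_le δ (Finset.mem_univ j)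
                rw [← hδ0def] at this
                linarith)
            linarith [hδ j x hxge hlt]
        _ = ∑ j, minv j x + (n:ℝ) * ε' := by
            rw [Finset.sum_add_distrib]
            simp [Finset.sum_const, Finset.card_univ, nsmul_eq_mul]
        _ ≤ (B:ℝ) + ε := by
            have : (n:ℝ) * ε' = ε := by
              rw [hε'def]; field_simp
            linarith
    -- Step 8 : conclude
    intro j
    have hnn : ∀ i ∈ Finset.univ, (0:ℝ) ≤ minv i xstar - minv i lam :=
      fun i _ => sub_nonneg.mpr (F5 i xstar lam hxlam)
    have hflam : ∑ i, minv i lam = (B:ℝ) := by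
      calc ∑ i, minv i lam = ∑ i, π i :=
            Finset.sum_congr rfl fun i _ => (hπlam i).symm
        _ = (B:ℝ) := hsum
    have h0 : ∑ i, (minv i xstar - minv i lam) = 0 := by
      apply le_antisymm
      · rw [Finset.sum_sub_distrib, hflam]; linarith
      · exact Finset.sum_nonneg hnn
    have hj := (Finset.sum_eq_zero_iff_of_nonneg hnn).mp h0 j (Finset.mem_univ j)
    rw [hπlam j]
    linarith
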